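/- Theorem 2 (δISS of single-layer GRUs): fix λ̌ ≥ 1 and define σ̌_z = σ(‖[W_z λ̌U_z b_z]‖_∞), σ̌_f = σ(‖[W_f λ̌U_f b_f]‖_∞), φ̌_r = tanh(‖[W_r λ̌U_r b_r]‖_∞). Suppose ‖U_r‖_∞ ( (1/4) λ̌ ‖U_f‖_∞ + σ̌_f ) < 1 − (1/4) ((λ̌ + φ̌_r)/(1 − σ̌_z)) ‖U_z‖_∞. Then the GRU is Incrementally Input-to-State Stable: there exist a class-KL function β_Δ and a class-K∞ function γ_Δu such that for every pair of initial states x̄_a, x̄_b with ‖x̄_a‖_∞ ≤ λ̌ and ‖x̄_b‖_∞ ≤ λ̌, every pair of input sequences u_a, u_b with ‖u_a(t)‖_∞ ≤ 1 and ‖u_b(t)‖_∞ ≤ 1 for all t, and every k ≥ 0, the corresponding state trajectories satisfy ‖x_a(k) − x_b(k)‖_∞ ≤ β_Δ(‖x̄_a − x̄_b‖_∞, k) + γ_Δu(sup_t ‖u_a(t) − u_b(t)‖_∞). -/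

import Mathlib

open Real Filter

/-- The _root_.sigmoid activation function. -/
noncomputable def sigmoid (s : ℝ) : ℝ := 1 / (1 + Real.exp (-s))


lemma one_add_exp_pos (s : ℝ) : 0 < 1 + Real.exp (-s) := by positivity

lemma sigmoid_pos (s : ℝ) : 0 < _root_.sigmoid s := by
  unfold _root_.sigmoid; positivity

lemma sigmoid_lt_one (s : ℝ) : _root_.sigmoid s < 1 := by
  unfold _root_.sigmoid
  rw [div_lt_one (one_add_exp_pos s)]
  linarith [Real.exp_pos (-s)]

lemma sigmoid_mono : Monotone _root_.sigmoid := by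
  intro a b hab
  unfold _root_.sigmoid
  gcongr

lemma sigmoid_hasDerivAt (s : ℝ) :
    HasDerivAt _root_.sigmoid (Real.exp (-s) / (1 + Real.exp (-s))^2) s := by
  have h : HasDerivAt (fun s : ℝ => 1 + Real.exp (-s)) (-Real.exp (-s)) s := by
    simpa using ((Real.hasDerivAt_exp (-s)).comp s ((hasDerivAt_id s).neg)).const_add 1
  have := h.inv (by positivity)
  have heq : _root_.sigmoid = fun s : ℝ => (1 + Real.exp (-s))⁻¹ := by
    funext t; simp [_root_.sigmoid]
  rw [heq]
  convert this using 2
  · rfl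
  · rfl
  · simp
  · simp

lemma sigmoid_lipschitz (a b : ℝ) : |_root_.sigmoid a - _root_.sigmoid b| ≤ (1/4) * |a - b| := by
  have := Convex.norm_image_sub_le_of_norm_hasDerivWithin_le
    (f := _root_.sigmoid) (f' := fun s => Real.exp (-s) / (1 + Real.exp (-s))^2)
    (s := Set.univ) (C := 1/4)
    (fun x _ => (sigmoid_hasDerivAt x).hasDerivWithinAt)
    (fun x _ => by
      rw [Real.norm_eq_abs, abs_of_nonneg (by positivity)]
      rw [div_le_iff₀ (by positivity)]
      nlinarith [sq_nonneg (1 - Real.exp (-x)), Real.exp_pos (-x)])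
    convex_univ (Set.mem_univ b) (Set.mem_univ a)
  simpa [Real.norm_eq_abs] using this

lemma tanh_eq_sigmoid (x : ℝ) : Real.tanh x = 2 * _root_.sigmoid (2 * x) - 1 := by
  rw [Real.tanh_eq_sinh_div_cosh, Real.sinh_eq, Real.cosh_eq]
  unfold _root_.sigmoid
  have h1 := Real.exp_pos x
  have h2 := Real.exp_pos (-x)
  have h3 := Real.exp_pos (-(2*x))
  have key : Real.exp (-(2*x)) = Real.exp (-x) * Real.exp (-x) := by
    rw [← Real.exp_add]; ring_nf
  have key2 : Real.exp x * Real.exp (-x) = 1 := by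
    rw [← Real.exp_add]; simp
  field_simp
  have key3 : Real.exp (-(x*2)) = Real.exp (-x) * Real.exp (-x) := by rw [mul_comm]; exact key
  rw [key3]
  linear_combination 2 * Real.exp (-x) * key2

lemma tanh_mono : Monotone Real.tanh := by
  intro a b hab
  rw [tanh_eq_sigmoid, tanh_eq_sigmoid]
  have := sigmoid_mono (by linarith : 2*a ≤ 2*b)
  linarith

lemma tanh_lipschitz (a b : ℝ) : |Real.tanh a - Real.tanh b| ≤ |a - b| := by
  rw [tanh_eq_sigmoid, tanh_eq_sigmoid]
  have := sigmoid_lipschitz (2*a) (2*b)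
  have h2 : |2*a - 2*b| = 2 * |a - b| := by
    rw [show (2:ℝ)*a - 2*b = 2*(a-b) by ring, abs_mul, abs_two]
  calc |2 * _root_.sigmoid (2*a) - 1 - (2 * _root_.sigmoid (2*b) - 1)|
      = 2 * |_root_.sigmoid (2*a) - _root_.sigmoid (2*b)| := by
        rw [show 2 * _root_.sigmoid (2*a) - 1 - (2 * _root_.sigmoid (2*b) - 1) = 2*(_root_.sigmoid (2*a) - _root_.sigmoid (2*b)) by ring, abs_mul, abs_two]
    _ ≤ |a - b| := by rw [h2] at this; linarith

lemma tanh_zero' : Real.tanh 0 = 0 := by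
  rw [Real.tanh_eq_sinh_div_cosh]; simp

lemma abs_tanh_le (x : ℝ) : |Real.tanh x| ≤ 1 := by
  rw [tanh_eq_sigmoid, abs_le]
  constructor <;> nlinarith [_root_.sigmoid_pos (2*x), _root_.sigmoid_lt_one (2*x)]

lemma abs_tanh_le_tanh {x c : ℝ} (h : |x| ≤ c) : |Real.tanh x| ≤ Real.tanh c := by
  have h1 : Real.tanh x ≤ Real.tanh c := tanh_mono (le_of_abs_le h)
  have h2 : Real.tanh (-c) ≤ Real.tanh x := tanh_mono (neg_le_of_abs_le h)
  have h3 : Real.tanh (-c) = -Real.tanh c := by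
    rw [tanh_eq_sigmoid, tanh_eq_sigmoid]
    unfold _root_.sigmoid
    have := Real.exp_pos (2*c); have := Real.exp_pos (-(2*c))
    have key : Real.exp (-(2*c)) * Real.exp (2*c) = 1 := by rw [← Real.exp_add]; simp
    field_simp
    nlinarith
  rw [abs_le]; constructor <;> linarith

/-- Induced infinity norm of a matrix (maximum absolute row sum). -/
noncomputable def matNorm {n m : ℕ} (A : Matrix (Fin n) (Fin m) ℝ) : ℝ :=
  ⨆ i, ∑ j, |A i j|

/-- Infinity norm of the horizontal concatenation `[A B c]`
(maximum absolute row sum of the concatenated matrix). -/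
noncomputable def catNorm {n m p : ℕ} (A : Matrix (Fin n) (Fin m) ℝ)
    (B : Matrix (Fin n) (Fin p) ℝ) (c : Fin n → ℝ) : ℝ :=
  ⨆ i, (∑ j, |A i j| + ∑ j, |B i j| + |c i|)

section norms
variable {n m p : ℕ}

lemma matNorm_nonneg (A : Matrix (Fin n) (Fin m) ℝ) : 0 ≤ matNorm A :=
  Real.iSup_nonneg fun i => Finset.sum_nonneg fun j _ => abs_nonneg _

lemma row_le_matNorm (A : Matrix (Fin n) (Fin m) ℝ) (i : Fin n) :
    ∑ j, |A i j| ≤ matNorm A := by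
  exact le_ciSup (f := fun i => ∑ j, |A i j|) (Set.Finite.bddAbove (Set.finite_range _)) i

lemma row_le_catNorm (A : Matrix (Fin n) (Fin m) ℝ)
    (B : Matrix (Fin n) (Fin p) ℝ) (c : Fin n → ℝ) (i : Fin n) :
    ∑ j, |A i j| + ∑ j, |B i j| + |c i| ≤ catNorm A B c := by
  exact le_ciSup (f := fun i => ∑ j, |A i j| + ∑ j, |B i j| + |c i|) (Set.Finite.bddAbove (Set.finite_range _)) i

lemma catNorm_nonneg (A : Matrix (Fin n) (Fin m) ℝ)
    (B : Matrix (Fin n) (Fin p) ℝ) (c : Fin n → ℝ) : 0 ≤ catNorm A B c :=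
  Real.iSup_nonneg fun i => by positivity

lemma abs_apply_le_norm (v : Fin m → ℝ) (i : Fin m) : |v i| ≤ ‖v‖ := by
  simpa [Real.norm_eq_abs] using norm_le_pi_norm v i

lemma abs_mulVec_le (A : Matrix (Fin n) (Fin m) ℝ) (v : Fin m → ℝ) (i : Fin n) :
    |A.mulVec v i| ≤ matNorm A * ‖v‖ := by
  have h1 : |A.mulVec v i| ≤ ∑ j, |A i j| * ‖v‖ := by
    rw [Matrix.mulVec, dotProduct]
    refine (Finset.abs_sum_le_sum_abs _ _).trans ?_
    refine Finset.sum_le_sum fun j _ => ?_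
    rw [abs_mul]
    exact mul_le_mul_of_nonneg_left (abs_apply_le_norm v j) (abs_nonneg _)
  refine h1.trans ?_
  rw [← Finset.sum_mul]
  exact mul_le_mul_of_nonneg_right (row_le_matNorm A i) (norm_nonneg _)

lemma abs_mulVec_sub_le (A : Matrix (Fin n) (Fin m) ℝ) (u v : Fin m → ℝ) (i : Fin n) :
    |A.mulVec u i - A.mulVec v i| ≤ matNorm A * ‖u - v‖ := by
  have : A.mulVec u i - A.mulVec v i = A.mulVec (u - v) i := by
    rw [Matrix.mulVec_sub]; simp
  rw [this]; exact abs_mulVec_le A (u - v) i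

lemma pi_norm_le {c : ℝ} (hc : 0 ≤ c) (v : Fin m → ℝ) (h : ∀ i, |v i| ≤ c) : ‖v‖ ≤ c := by
  rw [pi_norm_le_iff_of_nonneg hc]
  simpa [Real.norm_eq_abs] using h

end norms


/-- One step of the single-layer GRU:
`x⁺ = z ∘ x + (1 - z) ∘ tanh(W_r u + U_r (f ∘ x) + b_r)`,
`z = σ(W_z u + U_z x + b_z)`, `f = σ(W_f u + U_f x + b_f)`. -/
noncomputable def gruStep {nu nx : ℕ}
    (Wz Wf Wr : Matrix (Fin nx) (Fin nu) ℝ)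
    (Uz Uf Ur : Matrix (Fin nx) (Fin nx) ℝ)
    (bz bf br : Fin nx → ℝ)
    (u : Fin nu → ℝ) (x : Fin nx → ℝ) : Fin nx → ℝ :=
  let z : Fin nx → ℝ := fun i => _root_.sigmoid ((Wz.mulVec u + Uz.mulVec x + bz) i)
  let f : Fin nx → ℝ := fun i => _root_.sigmoid ((Wf.mulVec u + Uf.mulVec x + bf) i)
  let r : Fin nx → ℝ := fun i => Real.tanh ((Wr.mulVec u + Ur.mulVec (f * x) + br) i)
  fun j => z j * x j + (1 - z j) * r j

section gru
variable {nu nx : ℕ}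
  (Wz Wf Wr : Matrix (Fin nx) (Fin nu) ℝ)
  (Uz Uf Ur : Matrix (Fin nx) (Fin nx) ℝ)
  (bz bf br : Fin nx → ℝ) {lam : ℝ}

/-- bound on gate pre-activations -/
lemma gate_arg_bound (W : Matrix (Fin nx) (Fin nu) ℝ) (U : Matrix (Fin nx) (Fin nx) ℝ)
    (b : Fin nx → ℝ) (hlam : 1 ≤ lam) {u : Fin nu → ℝ} {x : Fin nx → ℝ}
    (hu : ‖u‖ ≤ 1) (hx : ‖x‖ ≤ lam) (i : Fin nx) :
    |(W.mulVec u + U.mulVec x + b) i| ≤ catNorm W (lam • U) b := by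
  have h1 : |(W.mulVec u + U.mulVec x + b) i| ≤
      |W.mulVec u i| + |U.mulVec x i| + |b i| := by
    simp only [Pi.add_apply]
    exact (abs_add_le _ _).trans (add_le_add_left (abs_add_le _ _) _)
  refine h1.trans ?_
  have h2 : |W.mulVec u i| ≤ ∑ j, |W i j| := by
    have := abs_mulVec_le W u i
    have h3 : matNorm W * ‖u‖ ≤ matNorm W * 1 :=
      mul_le_mul_of_nonneg_left hu (matNorm_nonneg W)
    calc |W.mulVec u i| ≤ ∑ j, |W i j| * ‖u‖ := by
          rw [Matrix.mulVec, dotProduct]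
          refine (Finset.abs_sum_le_sum_abs _ _).trans (Finset.sum_le_sum fun j _ => ?_)
          rw [abs_mul]
          exact mul_le_mul_of_nonneg_left (abs_apply_le_norm u j) (abs_nonneg _)
      _ ≤ ∑ j, |W i j| := by
          refine Finset.sum_le_sum fun j _ => ?_
          nlinarith [abs_nonneg (W i j), norm_nonneg u]
  have h4 : |U.mulVec x i| ≤ ∑ j, |(lam • U) i j| := by
    calc |U.mulVec x i| ≤ ∑ j, |U i j| * ‖x‖ := by
          rw [Matrix.mulVec, dotProduct]
          refine (Finset.abs_sum_le_sum_abs _ _).trans (Finset.sum_le_sum fun j _ => ?_)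
          rw [abs_mul]
          exact mul_le_mul_of_nonneg_left (abs_apply_le_norm x j) (abs_nonneg _)
      _ ≤ ∑ j, |(lam • U) i j| := by
          refine Finset.sum_le_sum fun j _ => ?_
          have : |(lam • U) i j| = lam * |U i j| := by
            simp [Matrix.smul_apply, abs_mul, abs_of_nonneg (by linarith : (0:ℝ) ≤ lam)]
          rw [this]
          nlinarith [abs_nonneg (U i j), abs_apply_le_norm x j, abs_nonneg (x j)]
  refine le_trans (by linarith [h2, h4]) (row_le_catNorm W (lam • U) b i)

/-- componentwise product of gate with state stays in the lam-ball -/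
lemma gate_prod_norm_le (hlam : 1 ≤ lam) (f x : Fin nx → ℝ)
    (hf : ∀ i, 0 ≤ f i ∧ f i ≤ 1) (hx : ‖x‖ ≤ lam) : ‖f * x‖ ≤ lam := by
  refine pi_norm_le (by linarith) _ fun i => ?_
  have h1 := abs_apply_le_norm x i
  have h2 := (hf i).1; have h3 := (hf i).2
  rw [Pi.mul_apply, abs_mul, abs_of_nonneg h2]
  nlinarith [abs_nonneg (x i)]

/-- invariance: states stay in the lam-ball -/
lemma gruStep_norm_le (hlam : 1 ≤ lam) {u : Fin nu → ℝ} {x : Fin nx → ℝ}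
    (hu : ‖u‖ ≤ 1) (hx : ‖x‖ ≤ lam) :
    ‖gruStep Wz Wf Wr Uz Uf Ur bz bf br u x‖ ≤ lam := by
  refine pi_norm_le (by linarith) _ fun i => ?_
  simp only [gruStep]
  set z := _root_.sigmoid ((Wz.mulVec u + Uz.mulVec x + bz) i) with hz
  have hz0 := _root_.sigmoid_pos ((Wz.mulVec u + Uz.mulVec x + bz) i)
  have hz1 := _root_.sigmoid_lt_one ((Wz.mulVec u + Uz.mulVec x + bz) i)
  have hr := abs_tanh_le (((Wr.mulVec u + Ur.mulVec
    ((fun i => _root_.sigmoid ((Wf.mulVec u + Uf.mulVec x + bf) i)) * x) + br)) i)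
  have hxi := abs_apply_le_norm x i
  calc |z * x i + (1 - z) * Real.tanh _| ≤ z * |x i| + (1 - z) * 1 := by
        refine (abs_add_le _ _).trans ?_
        rw [abs_mul, abs_mul, abs_of_nonneg hz0.le, abs_of_nonneg (by linarith : (0:ℝ) ≤ 1 - z)]
        have := mul_le_mul_of_nonneg_left hr (by linarith : (0:ℝ) ≤ 1 - z)
        linarith
    _ ≤ lam := by nlinarith [abs_nonneg (x i)]
end gru

lemma contract_arith {σz a za dz dr X U lam φr nUz nWz nUr nWf nWr : ℝ}
    (hX0 : 0 ≤ X) (hU0 : 0 ≤ U) (hza0 : 0 < za) (hza1 : za < 1) (hzale : za ≤ σz)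
    (ha0 : 0 ≤ a) (ha1 : a ≤ 1) (hφ : 0 ≤ φr) (hlam : 1 ≤ lam)
    (hnWz : 0 ≤ nWz) (hnUr : 0 ≤ nUr) (hnWf : 0 ≤ nWf) (hnWr : 0 ≤ nWr)
    (hdz0 : 0 ≤ dz) (hdr0 : 0 ≤ dr)
    (hdz : dz ≤ (1/4)*(nWz*U + nUz*X))
    (hdr : dr ≤ a*X + (nWr + (1/4)*lam*nUr*nWf)*U) :
    za*X + dz*lam + (1-za)*dr + dz*φr ≤
      (σz + (1-σz)*a + (1/4)*(lam+φr)*nUz)*X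
        + ((1/4)*(lam+φr)*nWz + nWr + (1/4)*lam*nUr*nWf)*U := by
  have h1 := mul_le_mul_of_nonneg_right hdz (by linarith : (0:ℝ) ≤ lam + φr)
  have h2 := mul_le_mul_of_nonneg_left hdr (by linarith : (0:ℝ) ≤ 1 - za)
  nlinarith [mul_nonneg (mul_nonneg (sub_nonneg.2 hzale) (sub_nonneg.2 ha1)) hX0,
    mul_nonneg hza0.le (mul_nonneg (by positivity : (0:ℝ) ≤ nWr + (1/4)*lam*nUr*nWf) hU0)]

section contract
variable {nu nx : ℕ}
  (Wz Wf Wr : Matrix (Fin nx) (Fin nu) ℝ)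
  (Uz Uf Ur : Matrix (Fin nx) (Fin nx) ℝ)
  (bz bf br : Fin nx → ℝ) {lam : ℝ}

set_option maxHeartbeats 1000000 in
lemma gru_step_contract (hlam : 1 ≤ lam)
    (ha1 : matNorm Ur * ((1/4)*lam*matNorm Uf + _root_.sigmoid (catNorm Wf (lam • Uf) bf)) ≤ 1)
    {u v : Fin nu → ℝ} {x y : Fin nx → ℝ}
    (hu : ‖u‖ ≤ 1) (hv : ‖v‖ ≤ 1) (hx : ‖x‖ ≤ lam) (hy : ‖y‖ ≤ lam) :
    ‖gruStep Wz Wf Wr Uz Uf Ur bz bf br u x - gruStep Wz Wf Wr Uz Uf Ur bz bf br v y‖ ≤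
      (_root_.sigmoid (catNorm Wz (lam • Uz) bz)
        + (1 - _root_.sigmoid (catNorm Wz (lam • Uz) bz)) *
          (matNorm Ur * ((1/4)*lam*matNorm Uf + _root_.sigmoid (catNorm Wf (lam • Uf) bf)))
        + (1/4)*(lam + Real.tanh (catNorm Wr (lam • Ur) br))*matNorm Uz) * ‖x - y‖
      + ((1/4)*(lam + Real.tanh (catNorm Wr (lam • Ur) br))*matNorm Wz
          + matNorm Wr + (1/4)*lam*matNorm Ur*matNorm Wf) * ‖u - v‖ := by
  set σz := _root_.sigmoid (catNorm Wz (lam • Uz) bz) with hσz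
  set σf := _root_.sigmoid (catNorm Wf (lam • Uf) bf) with hσf
  set φr := Real.tanh (catNorm Wr (lam • Ur) br) with hφr
  set X := ‖x - y‖ with hX
  set U := ‖u - v‖ with hU
  set a := matNorm Ur * ((1/4)*lam*matNorm Uf + σf) with ha
  have hX0 : 0 ≤ X := norm_nonneg _
  have hU0 : 0 ≤ U := norm_nonneg _
  have hσz0 : 0 < σz := sigmoid_pos _
  have hσz1 : σz < 1 := sigmoid_lt_one _
  have hσf0 : 0 < σf := sigmoid_pos _
  have hφr0 : 0 ≤ φr := by
    rw [hφr, ← tanh_zero']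
    exact tanh_mono (catNorm_nonneg _ _ _)
  have ha0 : 0 ≤ a := by
    have := matNorm_nonneg Ur; have := matNorm_nonneg Uf
    rw [ha]; positivity
  have hUz0 := matNorm_nonneg Uz
  have hWz0 := matNorm_nonneg Wz
  have hUf0 := matNorm_nonneg Uf
  have hWf0 := matNorm_nonneg Wf
  have hUr0 := matNorm_nonneg Ur
  have hWr0 := matNorm_nonneg Wr
  -- gates
  set fa : Fin nx → ℝ := fun i => _root_.sigmoid ((Wf.mulVec u + Uf.mulVec x + bf) i) with hfa
  set fb : Fin nx → ℝ := fun i => _root_.sigmoid ((Wf.mulVec v + Uf.mulVec y + bf) i) with hfb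
  -- bound on ‖fa * x - fb * y‖
  have hfprod : ‖fa * x - fb * y‖ ≤ σf * X + (1/4)*lam*(matNorm Wf * U + matNorm Uf * X) := by
    have hrhs0 : (0:ℝ) ≤ σf * X + (1/4)*lam*(matNorm Wf * U + matNorm Uf * X) := by
      nlinarith [mul_nonneg hσf0.le hX0, mul_nonneg hWf0 hU0, mul_nonneg hUf0 hX0]
    refine pi_norm_le hrhs0 _ fun j => ?_
    have hdecomp : (fa * x - fb * y) j = fa j * (x j - y j) + (fa j - fb j) * y j := by
      simp only [Pi.sub_apply, Pi.mul_apply]; ring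
    rw [hdecomp]
    have h1 : |fa j * (x j - y j)| ≤ σf * X := by
      rw [abs_mul]
      have hfaj : |fa j| ≤ σf := by
        rw [hfa, abs_of_nonneg (_root_.sigmoid_pos _).le]
        exact sigmoid_mono (le_trans (le_abs_self _) (gate_arg_bound Wf Uf bf hlam hu hx j))
      have := abs_apply_le_norm (x - y) j
      simp only [Pi.sub_apply] at this
      exact mul_le_mul hfaj this (abs_nonneg _) hσf0.le
    have h2 : |(fa j - fb j) * y j| ≤ (1/4)*(matNorm Wf * U + matNorm Uf * X) * lam := by
      rw [abs_mul]
      have hdf : |fa j - fb j| ≤ (1/4)*(matNorm Wf * U + matNorm Uf * X) := by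
        refine (sigmoid_lipschitz _ _).trans ?_
        have harg : |(Wf.mulVec u + Uf.mulVec x + bf) j - (Wf.mulVec v + Uf.mulVec y + bf) j|
            ≤ matNorm Wf * U + matNorm Uf * X := by
          have heq : (Wf.mulVec u + Uf.mulVec x + bf) j - (Wf.mulVec v + Uf.mulVec y + bf) j
              = (Wf.mulVec u j - Wf.mulVec v j) + (Uf.mulVec x j - Uf.mulVec y j) := by
            simp only [Pi.add_apply]; ring
          rw [heq]
          exact (abs_add_le _ _).trans
            (add_le_add (abs_mulVec_sub_le Wf u v j) (abs_mulVec_sub_le Uf x y j))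
        linarith
      have hyj : |y j| ≤ lam := (abs_apply_le_norm y j).trans hy
      have h0 : (0:ℝ) ≤ (1/4)*(matNorm Wf * U + matNorm Uf * X) := by positivity
      exact mul_le_mul hdf hyj (abs_nonneg _) h0
    calc |fa j * (x j - y j) + (fa j - fb j) * y j|
        ≤ |fa j * (x j - y j)| + |(fa j - fb j) * y j| := abs_add_le _ _
      _ ≤ σf * X + (1/4)*lam*(matNorm Wf * U + matNorm Uf * X) := by linarith
  -- main componentwise bound
  have hL0 : (0:ℝ) ≤ (σz + (1 - σz) * a + (1/4)*(lam + φr)*matNorm Uz) * X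
      + ((1/4)*(lam + φr)*matNorm Wz + matNorm Wr + (1/4)*lam*matNorm Ur*matNorm Wf) * U := by
    have h1 : (0:ℝ) ≤ σz + (1 - σz) * a + (1/4)*(lam + φr)*matNorm Uz := by
      nlinarith [mul_nonneg (sub_nonneg.2 hσz1.le) ha0, mul_nonneg hUz0 hφr0]
    have h2 : (0:ℝ) ≤ (1/4)*(lam + φr)*matNorm Wz + matNorm Wr + (1/4)*lam*matNorm Ur*matNorm Wf := by
      nlinarith [mul_nonneg hWz0 hφr0, mul_nonneg hUr0 hWf0]
    nlinarith [mul_nonneg h1 hX0, mul_nonneg h2 hU0]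
  refine pi_norm_le hL0 _ fun i => ?_
  simp only [gruStep, Pi.sub_apply]
  rw [← hfa, ← hfb]
  set za := _root_.sigmoid ((Wz.mulVec u + Uz.mulVec x + bz) i) with hza
  set zb := _root_.sigmoid ((Wz.mulVec v + Uz.mulVec y + bz) i) with hzb
  set ra := Real.tanh ((Wr.mulVec u + Ur.mulVec (fa * x) + br) i) with hra
  set rb := Real.tanh ((Wr.mulVec v + Ur.mulVec (fb * y) + br) i) with hrb
  have hza0 : 0 < za := sigmoid_pos _
  have hza1 : za < 1 := sigmoid_lt_one _
  have hzale : za ≤ σz := by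
    rw [hza, hσz]
    exact sigmoid_mono (le_trans (le_abs_self _) (gate_arg_bound Wz Uz bz hlam hu hx i))
  have hdz : |za - zb| ≤ (1/4)*(matNorm Wz * U + matNorm Uz * X) := by
    refine (sigmoid_lipschitz _ _).trans ?_
    have heq : (Wz.mulVec u + Uz.mulVec x + bz) i - (Wz.mulVec v + Uz.mulVec y + bz) i
        = (Wz.mulVec u i - Wz.mulVec v i) + (Uz.mulVec x i - Uz.mulVec y i) := by
      simp only [Pi.add_apply]; ring
    have harg := (heq ▸ (abs_add_le _ _)).trans
      (add_le_add (abs_mulVec_sub_le Wz u v i) (abs_mulVec_sub_le Uz x y i))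
    linarith
  have hyi : |y i| ≤ lam := (abs_apply_le_norm y i).trans hy
  have hxyi : |x i - y i| ≤ X := by
    have := abs_apply_le_norm (x - y) i
    simpa [Pi.sub_apply] using this
  have hrbb : |rb| ≤ φr := by
    rw [hrb, hφr]
    have hfby : ‖fb * y‖ ≤ lam := gate_prod_norm_le hlam fb y
      (fun j => ⟨(_root_.sigmoid_pos _).le, (_root_.sigmoid_lt_one _).le⟩) hy
    exact abs_tanh_le_tanh (gate_arg_bound Wr Ur br hlam hv hfby i)
  have hdr : |ra - rb| ≤ matNorm Wr * U + matNorm Ur *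
      (σf * X + (1/4)*lam*(matNorm Wf * U + matNorm Uf * X)) := by
    refine (tanh_lipschitz _ _).trans ?_
    have heq : (Wr.mulVec u + Ur.mulVec (fa * x) + br) i
        - (Wr.mulVec v + Ur.mulVec (fb * y) + br) i
        = (Wr.mulVec u i - Wr.mulVec v i)
          + (Ur.mulVec (fa * x) i - Ur.mulVec (fb * y) i) := by
      simp only [Pi.add_apply]; ring
    rw [heq]
    refine (abs_add_le _ _).trans (add_le_add (abs_mulVec_sub_le Wr u v i) ?_)
    refine (abs_mulVec_sub_le Ur (fa * x) (fb * y) i).trans ?_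
    exact mul_le_mul_of_nonneg_left hfprod hUr0
  clear_value σz σf φr X U a fa fb za zb ra rb
  -- decompose
  have hdecomp : za * x i + (1 - za) * ra - (zb * y i + (1 - zb) * rb)
      = za * (x i - y i) + (za - zb) * y i + (1 - za) * (ra - rb) + (zb - za) * rb := by
    ring
  rw [hdecomp]
  have habs : |za * (x i - y i) + (za - zb) * y i + (1 - za) * (ra - rb) + (zb - za) * rb|
      ≤ za * X + |za - zb| * lam + (1 - za) * |ra - rb| + |za - zb| * φr := by
    have e1 : |za * (x i - y i)| ≤ za * X := by
      rw [abs_mul, abs_of_nonneg hza0.le]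
      exact mul_le_mul_of_nonneg_left hxyi hza0.le
    have e2 : |(za - zb) * y i| ≤ |za - zb| * lam := by
      rw [abs_mul]; exact mul_le_mul_of_nonneg_left hyi (abs_nonneg _)
    have e3 : |(1 - za) * (ra - rb)| ≤ (1 - za) * |ra - rb| := by
      rw [abs_mul, abs_of_nonneg (by linarith : (0:ℝ) ≤ 1 - za)]
    have e4 : |(zb - za) * rb| ≤ |za - zb| * φr := by
      rw [abs_mul, abs_sub_comm zb za]
      exact mul_le_mul_of_nonneg_left hrbb (abs_nonneg _)
    have t1 := abs_add_le (za * (x i - y i) + (za - zb) * y i + (1 - za) * (ra - rb)) ((zb - za) * rb)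
    have t2 := abs_add_le (za * (x i - y i) + (za - zb) * y i) ((1 - za) * (ra - rb))
    have t3 := abs_add_le (za * (x i - y i)) ((za - zb) * y i)
    linarith
  refine habs.trans ?_
  have hdr' : |ra - rb| ≤ a * X + (matNorm Wr + (1/4)*lam*matNorm Ur*matNorm Wf) * U := by
    refine hdr.trans (le_of_eq ?_)
    rw [ha]; ring
  exact contract_arith hX0 hU0 hza0 hza1 hzale ha0 ha1 hφr0 hlam hWz0 hUr0 hWf0 hWr0
    (abs_nonneg _) (abs_nonneg _) hdz hdr'
end contract


/-- A function `γ : [0,∞) → [0,∞)` is of class K∞ if it is continuous,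
strictly increasing, unbounded and `γ 0 = 0`. -/
def IsKInf (γ : ℝ → ℝ) : Prop :=
  ContinuousOn γ (Set.Ici 0) ∧ StrictMonoOn γ (Set.Ici 0) ∧ γ 0 = 0 ∧
    ∀ M : ℝ, ∃ s, 0 ≤ s ∧ M < γ s

/-- A function `β : [0,∞) × ℕ → [0,∞)` is of class KL if `β (·, k)` is of class K∞
for each `k`, `β (s, ·)` is nonincreasing, and `β (s, k) → 0` as `k → ∞`. -/
def IsKL (β : ℝ → ℕ → ℝ) : Prop :=
  (∀ k : ℕ, IsKInf fun s => β s k) ∧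
    (∀ s : ℝ, 0 ≤ s → ∀ k l : ℕ, k ≤ l → β s l ≤ β s k) ∧
    (∀ s : ℝ, 0 ≤ s → Filter.Tendsto (fun k : ℕ => β s k) Filter.atTop (nhds 0))

lemma isKInf_linear {c : ℝ} (hc : 0 < c) : IsKInf (fun s => c * s) := by
  refine ⟨(continuous_const.mul continuous_id).continuousOn, ?_, mul_zero c, ?_⟩
  · intro p _ q _ hpq
    exact mul_lt_mul_of_pos_left hpq hc
  · intro M
    refine ⟨(|M| + 1)/c, by positivity, ?_⟩
    show M < c * ((|M| + 1)/c)
    rw [mul_div_cancel₀ _ hc.ne']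
    calc M ≤ |M| := le_abs_self M
    _ < |M| + 1 := by linarith

lemma isKL_geom {L : ℝ} (hL0 : 0 < L) (hL1 : L < 1) : IsKL (fun s k => L^k * s) := by
  refine ⟨fun k => isKInf_linear (by positivity), ?_, ?_⟩
  · intro s hs k l hkl
    exact mul_le_mul_of_nonneg_right (pow_le_pow_of_le_one hL0.le hL1.le hkl) hs
  · intro s _
    simpa using (tendsto_pow_atTop_nhds_zero_of_lt_one hL0.le hL1).mul_const s

lemma iss_assembly {nu nx : ℕ} (F : (Fin nu → ℝ) → (Fin nx → ℝ) → (Fin nx → ℝ))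
    (lam L M : ℝ) (hlam : 1 ≤ lam) (hL1 : L < 1) (hM0 : 0 ≤ M)
    (hinv : ∀ u x, ‖u‖ ≤ 1 → ‖x‖ ≤ lam → ‖F u x‖ ≤ lam)
    (hcontract : ∀ u v x y, ‖u‖ ≤ 1 → ‖v‖ ≤ 1 → ‖x‖ ≤ lam → ‖y‖ ≤ lam →
      ‖F u x - F v y‖ ≤ L * ‖x - y‖ + M * ‖u - v‖) :
    ∃ β : ℝ → ℕ → ℝ, ∃ γu : ℝ → ℝ, IsKL β ∧ IsKInf γu ∧
      ∀ xbara xbarb : Fin nx → ℝ, ‖xbara‖ ≤ lam → ‖xbarb‖ ≤ lam →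
        ∀ ua ub : ℕ → Fin nu → ℝ, (∀ t, ‖ua t‖ ≤ 1) → (∀ t, ‖ub t‖ ≤ 1) →
          ∀ xa xb : ℕ → Fin nx → ℝ, xa 0 = xbara → xb 0 = xbarb →
            (∀ k, xa (k + 1) = F (ua k) (xa k)) →
            (∀ k, xb (k + 1) = F (ub k) (xb k)) →
              ∀ k : ℕ, ‖xa k - xb k‖ ≤ β ‖xbara - xbarb‖ k + γu (⨆ t, ‖ua t - ub t‖) := by
  set L' := max L (1/2) with hL'
  have hL'0 : 0 < L' := lt_max_of_lt_right (by norm_num)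
  have hL'1 : L' < 1 := max_lt hL1 (by norm_num)
  have hLL' : L ≤ L' := le_max_left _ _
  have hgain0 : 0 ≤ M/(1 - L') := div_nonneg hM0 (by linarith)
  refine ⟨fun s k => L'^k * s, fun s => (M/(1 - L') + 1) * s,
    isKL_geom hL'0 hL'1, isKInf_linear (by linarith), ?_⟩
  intro xbara xbarb hxa hxb ua ub hua hub xa xb hxa0 hxb0 hstepa hstepb
  set S := ⨆ t, ‖ua t - ub t‖ with hS
  have hSb : BddAbove (Set.range fun t => ‖ua t - ub t‖) := by
    refine ⟨2, fun r hr => ?_⟩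
    obtain ⟨t, rfl⟩ := hr
    calc ‖ua t - ub t‖ ≤ ‖ua t‖ + ‖ub t‖ := norm_sub_le _ _
      _ ≤ 2 := by linarith [hua t, hub t]
  have hSle : ∀ t, ‖ua t - ub t‖ ≤ S := fun t => le_ciSup hSb t
  have hS0 : 0 ≤ S := le_trans (norm_nonneg _) (hSle 0)
  have hinvt : ∀ k, ‖xa k‖ ≤ lam ∧ ‖xb k‖ ≤ lam := by
    intro k
    induction k with
    | zero => rw [hxa0, hxb0]; exact ⟨hxa, hxb⟩
    | succ n ih =>
      rw [hstepa n, hstepb n]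
      exact ⟨hinv _ _ (hua n) ih.1, hinv _ _ (hub n) ih.2⟩
  have hmain : ∀ k, ‖xa k - xb k‖ ≤ L'^k * ‖xbara - xbarb‖ + (M/(1 - L')) * S := by
    intro k
    induction k with
    | zero =>
      rw [hxa0, hxb0, pow_zero, one_mul]
      nlinarith
    | succ n ih =>
      rw [hstepa n, hstepb n]
      have hstep := hcontract _ _ _ _ (hua n) (hub n) (hinvt n).1 (hinvt n).2
      have h1 : L * ‖xa n - xb n‖ ≤ L' * (L'^n * ‖xbara - xbarb‖ + (M/(1 - L')) * S) := by
        calc L * ‖xa n - xb n‖ ≤ L' * ‖xa n - xb n‖ :=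
              mul_le_mul_of_nonneg_right hLL' (norm_nonneg _)
          _ ≤ L' * (L'^n * ‖xbara - xbarb‖ + (M/(1 - L')) * S) :=
              mul_le_mul_of_nonneg_left ih hL'0.le
      have h2 : M * ‖ua n - ub n‖ ≤ M * S := mul_le_mul_of_nonneg_left (hSle n) hM0
      have h3 : L' * (M/(1 - L')) * S + M * S = (M/(1 - L')) * S := by
        have hne2 : (1:ℝ) - L' ≠ 0 := by linarith
        have he : L' * (M/(1 - L')) + M = M/(1 - L') := by field_simp; ring
        calc L' * (M/(1 - L')) * S + M * S = (L' * (M/(1 - L')) + M) * S := by ring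
          _ = (M/(1 - L')) * S := by rw [he]
      calc ‖F (ua n) (xa n) - F (ub n) (xb n)‖
          ≤ L * ‖xa n - xb n‖ + M * ‖ua n - ub n‖ := hstep
        _ ≤ L' * (L'^n * ‖xbara - xbarb‖ + (M/(1 - L')) * S) + M * S := by linarith
        _ = L'^(n+1) * ‖xbara - xbarb‖ + (L' * (M/(1 - L')) * S + M * S) := by ring
        _ = L'^(n+1) * ‖xbara - xbarb‖ + (M/(1 - L')) * S := by rw [h3]
  intro k
  refine (hmain k).trans ?_
  have h9 : (M/(1 - L')) * S ≤ (M/(1 - L') + 1) * S := by nlinarith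
  linarith


set_option maxHeartbeats 1000000 in
/-- **Theorem 2 (δISS of single-layer GRUs).**
With `σ̌_z = σ(‖[W_z λ̌U_z b_z]‖_∞)`, `σ̌_f = σ(‖[W_f λ̌U_f b_f]‖_∞)`,
`φ̌_r = tanh(‖[W_r λ̌U_r b_r]‖_∞)`, if
`‖U_r‖_∞ ((1/4) λ̌ ‖U_f‖_∞ + σ̌_f) < 1 - (1/4) ((λ̌ + φ̌_r)/(1 - σ̌_z)) ‖U_z‖_∞`
then the GRU is Incrementally Input-to-State Stable on initial states bounded by `λ̌`. -/
theorem gru_deltaISS {nu nx : ℕ}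
    (Wz Wf Wr : Matrix (Fin nx) (Fin nu) ℝ)
    (Uz Uf Ur : Matrix (Fin nx) (Fin nx) ℝ)
    (bz bf br : Fin nx → ℝ)
    (lam : ℝ) (hlam : 1 ≤ lam)
    (hcond : matNorm Ur * ((1 / 4) * lam * matNorm Uf + _root_.sigmoid (catNorm Wf (lam • Uf) bf)) <
      1 - (1 / 4) * ((lam + Real.tanh (catNorm Wr (lam • Ur) br)) /
        (1 - _root_.sigmoid (catNorm Wz (lam • Uz) bz))) * matNorm Uz) :
    ∃ β : ℝ → ℕ → ℝ, ∃ γu : ℝ → ℝ, IsKL β ∧ IsKInf γu ∧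
      ∀ xbara xbarb : Fin nx → ℝ, ‖xbara‖ ≤ lam → ‖xbarb‖ ≤ lam →
        ∀ ua ub : ℕ → Fin nu → ℝ, (∀ t, ‖ua t‖ ≤ 1) → (∀ t, ‖ub t‖ ≤ 1) →
          ∀ xa xb : ℕ → Fin nx → ℝ, xa 0 = xbara → xb 0 = xbarb →
            (∀ k, xa (k + 1) = gruStep Wz Wf Wr Uz Uf Ur bz bf br (ua k) (xa k)) →
            (∀ k, xb (k + 1) = gruStep Wz Wf Wr Uz Uf Ur bz bf br (ub k) (xb k)) →
              ∀ k : ℕ, ‖xa k - xb k‖ ≤ β ‖xbara - xbarb‖ k + γu (⨆ t, ‖ua t - ub t‖) := by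
  have hσz1 : _root_.sigmoid (catNorm Wz (lam • Uz) bz) < 1 := sigmoid_lt_one _
  have hσz0 : 0 < _root_.sigmoid (catNorm Wz (lam • Uz) bz) := sigmoid_pos _
  have hσf0 : 0 < _root_.sigmoid (catNorm Wf (lam • Uf) bf) := sigmoid_pos _
  have hφr0 : 0 ≤ Real.tanh (catNorm Wr (lam • Ur) br) := by
    rw [← tanh_zero']; exact tanh_mono (catNorm_nonneg _ _ _)
  have hUz0 := matNorm_nonneg Uz
  have hWz0 := matNorm_nonneg Wz
  have hUf0 := matNorm_nonneg Uf
  have hWf0 := matNorm_nonneg Wf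
  have hUr0 := matNorm_nonneg Ur
  have hWr0 := matNorm_nonneg Wr
  have hne : (1:ℝ) - _root_.sigmoid (catNorm Wz (lam • Uz) bz) ≠ 0 := by linarith
  have hquot0 : 0 ≤ (1/4) * ((lam + Real.tanh (catNorm Wr (lam • Ur) br)) /
      (1 - _root_.sigmoid (catNorm Wz (lam • Uz) bz))) * matNorm Uz :=
    mul_nonneg (mul_nonneg (by norm_num) (div_nonneg (by linarith) (by linarith))) hUz0
  have ha1 : matNorm Ur * ((1/4)*lam*matNorm Uf + _root_.sigmoid (catNorm Wf (lam • Uf) bf)) ≤ 1 := by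
    linarith [hcond]
  have hd_eq : (1/4) * ((lam + Real.tanh (catNorm Wr (lam • Ur) br)) /
      (1 - _root_.sigmoid (catNorm Wz (lam • Uz) bz))) * matNorm Uz
        * (1 - _root_.sigmoid (catNorm Wz (lam • Uz) bz))
      = (1/4)*(lam + Real.tanh (catNorm Wr (lam • Ur) br))*matNorm Uz := by
    field_simp [hne]
  have hL1 : _root_.sigmoid (catNorm Wz (lam • Uz) bz)
      + (1 - _root_.sigmoid (catNorm Wz (lam • Uz) bz)) *
        (matNorm Ur * ((1/4)*lam*matNorm Uf + _root_.sigmoid (catNorm Wf (lam • Uf) bf)))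
      + (1/4)*(lam + Real.tanh (catNorm Wr (lam • Ur) br))*matNorm Uz < 1 := by
    have h2 := mul_lt_mul_of_pos_right hcond
      (by linarith : (0:ℝ) < 1 - _root_.sigmoid (catNorm Wz (lam • Uz) bz))
    rw [sub_mul, one_mul, hd_eq] at h2
    nlinarith
  have hM0 : 0 ≤ (1/4)*(lam + Real.tanh (catNorm Wr (lam • Ur) br))*matNorm Wz
      + matNorm Wr + (1/4)*lam*matNorm Ur*matNorm Wf := by positivity
  exact iss_assembly (gruStep Wz Wf Wr Uz Uf Ur bz bf br) lam _ _ hlam hL1 hM0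
    (fun u x hu hx => gruStep_norm_le _ _ _ _ _ _ _ _ _ hlam hu hx)
    (fun u v x y hu hv hx hy =>
      gru_step_contract Wz Wf Wr Uz Uf Ur bz bf br hlam ha1 hu hv hx hy)
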